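/- Let f be strictly convex and strictly increasing on [K1,K3], and suppose P(K3) > P(K1). Define the interpolated price P(K2) = P(K1) + (P(K3)-P(K1))(f(K2)-f(K1))/(f(K3)-f(K1)) for K1 < K2 < K3. Then the butterfly no-arbitrage condition holds: (K3-K2)P(K1) - (K3-K1)P(K2) + (K2-K1)P(K3) > 0. -/

import Mathlib

/-- If the interpolation variable is transformed by a strictly convex and
strictly increasing function `f` on `[K1,K3]`, and `P(K1) < P(K3)`, then the
interpolated price satisfies the strict butterfly no-arbitrage condition. -/
theorem convex_interpolation_butterfly
    (K1 K2 K3 P1 P3 : ℝ) (h12 : K1 < K2) (h23 : K2 < K3)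
    (f : ℝ → ℝ)
    (hconv : StrictConvexOn ℝ (Set.Icc K1 K3) f)
    (hmono : StrictMonoOn f (Set.Icc K1 K3))
    (hP : P1 < P3)
    (P2 : ℝ)
    (hP2 : P2 = P1 + (P3 - P1) * (f K2 - f K1) / (f K3 - f K1)) :
    (K3 - K2) * P1 - (K3 - K1) * P2 + (K2 - K1) * P3 > 0 := by
  have h13 : K1 < K3 := h12.trans h23
  have hK1 : K1 ∈ Set.Icc K1 K3 := ⟨le_refl _, h13.le⟩
  have hK3 : K3 ∈ Set.Icc K1 K3 := ⟨h13.le, le_refl _⟩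
  have hd : f K1 < f K3 := hmono hK1 hK3 h13
  set a := (K3 - K2) / (K3 - K1) with ha
  set b := (K2 - K1) / (K3 - K1) with hb
  have hden : (0:ℝ) < K3 - K1 := by linarith
  have ha0 : 0 < a := div_pos (by linarith) hden
  have hb0 : 0 < b := div_pos (by linarith) hden
  have hab : a + b = 1 := by rw [ha, hb]; field_simp; ring
  have hcomb : a • K1 + b • K3 = K2 := by
    simp only [smul_eq_mul, ha, hb]; field_simp; ring
  have hlt := hconv.2 hK1 hK3 (ne_of_lt h13) ha0 hb0 hab
  rw [hcomb] at hlt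
  simp only [smul_eq_mul] at hlt
  have hfd : 0 < f K3 - f K1 := by linarith
  have key : (f K2 - f K1) / (f K3 - f K1) < b := by
    rw [div_lt_iff₀ hfd]
    have ha' : a = 1 - b := by linarith
    rw [ha'] at hlt
    nlinarith [hlt]
  rw [hP2]
  have hmain : (P3 - P1) * (f K2 - f K1) / (f K3 - f K1) < (P3 - P1) * b := by
    rw [mul_div_assoc]
    exact mul_lt_mul_of_pos_left key (by linarith)
  have hbval : (K3 - K1) * b = K2 - K1 := by rw [hb]; field_simp
  nlinarith [hmain, hbval]
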